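/- With notation as above (C the image in PGL₂(F_q) of the nonsingular-matrix group C̃ arising from F_{q²}^×, and D the image of the upper triangular matrices), PGL₂(F_q) = C·D and C ∩ D = 1. In other words, PGL₂(F_q) admits an exact factorization by the solvable subgroups C and D. -/

import Mathlib

open Matrix Polynomial

/-- `PGL₂(F)`: the general linear group modulo its center. -/
abbrev PGL2 (F : Type*) [Field F] := GL (Fin 2) F ⧸ Subgroup.center (GL (Fin 2) F)

section Aux

variable {F : Type*} [Field F]

/-- Every element of the center of `GL₂(F)` is a nonzero scalar matrix. -/
lemma GL_center_scalar {Z : GL (Fin 2) F} (hZ : Z ∈ Subgroup.center (GL (Fin 2) F)) :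
    ∃ z : F, z ≠ 0 ∧ (Z : Matrix (Fin 2) (Fin 2) F) = z • 1 := by
  have hUd : (!![1,1;0,1] : Matrix (Fin 2) (Fin 2) F).det ≠ 0 := by
    simp [Matrix.det_fin_two_of]
  have hLd : (!![1,0;1,1] : Matrix (Fin 2) (Fin 2) F).det ≠ 0 := by
    simp [Matrix.det_fin_two_of]
  set U : GL (Fin 2) F := Matrix.GeneralLinearGroup.mkOfDetNeZero _ hUd with hU
  set L : GL (Fin 2) F := Matrix.GeneralLinearGroup.mkOfDetNeZero _ hLd with hL
  have hUv : (U : Matrix (Fin 2) (Fin 2) F) = !![1,1;0,1] := rfl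
  have hLv : (L : Matrix (Fin 2) (Fin 2) F) = !![1,0;1,1] := rfl
  have h1 : (U : Matrix (Fin 2) (Fin 2) F) * Z = (Z : Matrix (Fin 2) (Fin 2) F) * U := by
    have := Subgroup.mem_center_iff.mp hZ U
    exact congrArg Units.val this
  have h2 : (L : Matrix (Fin 2) (Fin 2) F) * Z = (Z : Matrix (Fin 2) (Fin 2) F) * L := by
    have := Subgroup.mem_center_iff.mp hZ L
    exact congrArg Units.val this
  have e1 := Matrix.ext_iff.mpr h1
  have e2 := Matrix.ext_iff.mpr h2
  have h00 := e1 0 0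
  have h01 := e1 0 1
  have h11 := e2 1 1
  simp [hUv, hLv, Matrix.mul_apply, Fin.sum_univ_two] at h00 h01 h11
  have hz10 : Z.val 1 0 = 0 := h00
  have hz01 : Z.val 0 1 = 0 := h11
  have hz11 : Z.val 1 1 = Z.val 0 0 := by linear_combination h01
  refine ⟨Z.val 0 0, ?_, ?_⟩
  · intro h
    have hdet : IsUnit (Z : Matrix (Fin 2) (Fin 2) F).det :=
      (Matrix.isUnit_iff_isUnit_det _).mp Z.isUnit
    rw [Matrix.det_fin_two, hz10, hz01, h, hz11, h] at hdet
    simp at hdet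
  · ext i j
    fin_cases i <;> fin_cases j <;>
      simp [Matrix.one_apply, hz10, hz01, hz11]

/-- Invertible upper triangular matrices. -/
def triSubgroup (F : Type*) [Field F] : Subgroup (GL (Fin 2) F) where
  carrier := {M | (M : Matrix (Fin 2) (Fin 2) F) 1 0 = 0}
  one_mem' := by simp
  mul_mem' := by
    intro A B hA hB
    simp only [Set.mem_setOf_eq] at *
    simp [Matrix.mul_apply, Fin.sum_univ_two, hA, hB]
  inv_mem' := by
    intro A hA
    simp only [Set.mem_setOf_eq] at *
    rw [Matrix.GeneralLinearGroup.coe_inv, Matrix.inv_def, Matrix.adjugate_fin_two]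
    simp [hA]

lemma tri00_ne {M : GL (Fin 2) F} (hM : M ∈ triSubgroup F) :
    (M : Matrix (Fin 2) (Fin 2) F) 0 0 ≠ 0 := by
  have h10 : (M : Matrix (Fin 2) (Fin 2) F) 1 0 = 0 := hM
  have hdet : IsUnit (M : Matrix (Fin 2) (Fin 2) F).det :=
    (Matrix.isUnit_iff_isUnit_det _).mp M.isUnit
  rw [Matrix.det_fin_two] at hdet
  intro h
  rw [h, h10] at hdet
  simp at hdet

lemma tri11_ne {M : GL (Fin 2) F} (hM : M ∈ triSubgroup F) :
    (M : Matrix (Fin 2) (Fin 2) F) 1 1 ≠ 0 := by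
  have hdet : IsUnit (M : Matrix (Fin 2) (Fin 2) F).det :=
    (Matrix.isUnit_iff_isUnit_det _).mp M.isUnit
  have h10 : (M : Matrix (Fin 2) (Fin 2) F) 1 0 = 0 := hM
  rw [Matrix.det_fin_two] at hdet
  intro h
  rw [h, h10] at hdet
  simp at hdet

/-- Diagonal of a triangular matrix, as a hom to `Fˣ × Fˣ`. -/
def triDiag (F : Type*) [Field F] : triSubgroup F →* Fˣ × Fˣ where
  toFun M := (Units.mk0 _ (tri00_ne M.2), Units.mk0 _ (tri11_ne M.2))
  map_one' := by
    ext <;> simp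
  map_mul' := by
    intro M N
    have hN : (N.1 : Matrix (Fin 2) (Fin 2) F) 1 0 = 0 := N.2
    have hM : (M.1 : Matrix (Fin 2) (Fin 2) F) 1 0 = 0 := M.2
    ext <;> simp [Matrix.mul_apply, Fin.sum_univ_two, hN, hM]

lemma isSolvable_tri : IsSolvable (triSubgroup F) := by
  haveI : Group.IsSolvable ((triDiag F).ker) := by
    apply isSolvable_of_comm
    rintro ⟨⟨M, hM⟩, hMk⟩ ⟨⟨N, hN⟩, hNk⟩
    simp only [MonoidHom.mem_ker, triDiag, MonoidHom.coe_mk, OneHom.coe_mk,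
      Prod.mk_eq_one] at hMk hNk
    have hM00 : (M : Matrix (Fin 2) (Fin 2) F) 0 0 = 1 := congrArg Units.val hMk.1
    have hM11 : (M : Matrix (Fin 2) (Fin 2) F) 1 1 = 1 := congrArg Units.val hMk.2
    have hN00 : (N : Matrix (Fin 2) (Fin 2) F) 0 0 = 1 := congrArg Units.val hNk.1
    have hN11 : (N : Matrix (Fin 2) (Fin 2) F) 1 1 = 1 := congrArg Units.val hNk.2
    have hM10 : (M : Matrix (Fin 2) (Fin 2) F) 1 0 = 0 := hM
    have hN10 : (N : Matrix (Fin 2) (Fin 2) F) 1 0 = 0 := hN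
    apply Subtype.ext
    apply Subtype.ext
    apply Units.ext
    show (M : Matrix (Fin 2) (Fin 2) F) * N = (N : Matrix (Fin 2) (Fin 2) F) * M
    ext i j
    fin_cases i <;> fin_cases j <;>
      simp [Matrix.mul_apply, Fin.sum_univ_two, hM00, hM11, hN00, hN11, hM10, hN10, add_comm]
  apply solvable_of_ker_le_range ((triDiag F).ker.subtype) (triDiag F)
  rw [Subgroup.range_subtype]

lemma noRoot {F K : Type*} [Field F] [Fintype F] [Field K] [Fintype K] [Algebra F K]
    (g : Kˣ) (c d : F) (hmin : minpoly F (g : K) = X ^ 2 + C c * X + C d) :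
    ∀ r : F, r ^ 2 + c * r + d ≠ 0 := by
  intro r hr
  have hint : IsIntegral F (g : K) := IsIntegral.of_finite F _
  have hirr : Irreducible (X ^ 2 + C c * X + C d : F[X]) := hmin ▸ minpoly.irreducible hint
  have hdeg : (X ^ 2 + C c * X + C d : F[X]).natDegree = 2 := by compute_degree!
  have hroot : IsRoot (X ^ 2 + C c * X + C d : F[X]) r := by
    simp [IsRoot, hr]
  obtain ⟨q, hq⟩ := Polynomial.dvd_iff_isRoot.mpr hroot
  rcases hirr.isUnit_or_isUnit hq with hu | hu
  · exact (Polynomial.not_isUnit_X_sub_C r) hu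
  · have hq0 : q ≠ 0 := by
      rintro rfl
      rw [mul_zero] at hq
      rw [hq] at hdeg
      simp at hdeg
    have := Polynomial.natDegree_eq_zero_of_isUnit hu
    rw [hq, Polynomial.natDegree_mul (Polynomial.X_sub_C_ne_zero r) hq0,
      Polynomial.natDegree_X_sub_C, this] at hdeg
    simp at hdeg

lemma detA_ne {c d : F} (hroot : ∀ r : F, r ^ 2 + c * r + d ≠ 0)
    {a b : F} (hab : (a, b) ≠ (0, 0)) : a * (a - c * b) - (-d * b) * b ≠ 0 := by
  by_cases hb : b = 0
  · subst hb
    have ha : a ≠ 0 := by simpa using hab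
    simpa using pow_ne_zero 2 ha
  · intro h
    apply hroot (-(a / b))
    have key : (-(a/b))^2 + c*(-(a/b)) + d = (a * (a - c * b) - (-d * b) * b)/b^2 := by
      field_simp
      ring
    rw [key, h, zero_div]

end Aux

theorem pgl_two_exact_factorization
    (F K : Type*) [Field F] [Fintype F] [Field K] [Fintype K] [Algebra F K]
    (hcard : Fintype.card K = Fintype.card F ^ 2)
    (g : Kˣ) (hgen : ∀ u : Kˣ, u ∈ Subgroup.zpowers g)
    (c d : F) (hmin : minpoly F (g : K) = X ^ 2 + C c * X + C d)
    (C D : Subgroup (PGL2 F))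
    (hC : ∀ x : PGL2 F, x ∈ C ↔ ∃ M : GL (Fin 2) F,
      (∃ a b : F, (a, b) ≠ (0, 0) ∧ M.val = !![a, -d * b; b, a - c * b]) ∧
      (QuotientGroup.mk M : PGL2 F) = x)
    (hD : ∀ x : PGL2 F, x ∈ D ↔
      ∃ M : GL (Fin 2) F, M.val 1 0 = 0 ∧ (QuotientGroup.mk M : PGL2 F) = x) :
    IsSolvable C ∧ IsSolvable D ∧
      (∀ x : PGL2 F, ∃ a ∈ C, ∃ b ∈ D, x = a * b) ∧ C ⊓ D = ⊥ := by
  have hroot : ∀ r : F, r ^ 2 + c * r + d ≠ 0 := noRoot g c d hmin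
  refine ⟨?_, ?_, ?_, ?_⟩
  · -- C is solvable (in fact abelian)
    apply isSolvable_of_comm
    rintro ⟨x, hx⟩ ⟨y, hy⟩
    obtain ⟨M, ⟨a1, b1, -, hMv⟩, hMx⟩ := (hC x).mp hx
    obtain ⟨N, ⟨a2, b2, -, hNv⟩, hNy⟩ := (hC y).mp hy
    apply Subtype.ext
    show x * y = y * x
    rw [← hMx, ← hNy, ← QuotientGroup.mk_mul, ← QuotientGroup.mk_mul]
    congr 1
    apply Units.ext
    show M.val * N.val = N.val * M.val
    rw [hMv, hNv]
    ext i j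
    fin_cases i <;> fin_cases j <;>
      simp [Matrix.mul_apply, Fin.sum_univ_two] <;> ring
  · -- D is solvable
    have hDeq : D = (triSubgroup F).map (QuotientGroup.mk' (Subgroup.center (GL (Fin 2) F))) := by
      ext x
      rw [hD, Subgroup.mem_map]
      constructor
      · rintro ⟨M, hM0, rfl⟩; exact ⟨M, hM0, rfl⟩
      · rintro ⟨M, hM0, rfl⟩; exact ⟨M, hM0, rfl⟩
    rw [hDeq]
    haveI : Group.IsSolvable (triSubgroup F) := isSolvable_tri (F := F)
    exact solvable_of_surjective
      (MonoidHom.subgroupMap_surjective (QuotientGroup.mk' _) (triSubgroup F))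
  · -- exact factorization
    intro x
    obtain ⟨M, rfl⟩ := QuotientGroup.mk_surjective x
    set a : F := (M : Matrix (Fin 2) (Fin 2) F) 0 0 with ha
    set b : F := (M : Matrix (Fin 2) (Fin 2) F) 1 0 with hb
    have hab : (a, b) ≠ (0, 0) := by
      intro h
      rw [Prod.mk.injEq] at h
      have hdet : IsUnit (M : Matrix (Fin 2) (Fin 2) F).det :=
        (Matrix.isUnit_iff_isUnit_det _).mp M.isUnit
      rw [Matrix.det_fin_two, ← ha, ← hb, h.1, h.2] at hdet
      simp at hdet
    have hdetA : (!![a, -d*b; b, a - c*b] : Matrix (Fin 2) (Fin 2) F).det ≠ 0 := by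
      rw [Matrix.det_fin_two_of]
      exact detA_ne hroot hab
    set A : GL (Fin 2) F := Matrix.GeneralLinearGroup.mkOfDetNeZero _ hdetA with hA
    have hAv : (A : Matrix (Fin 2) (Fin 2) F) = !![a, -d*b; b, a - c*b] := rfl
    refine ⟨QuotientGroup.mk A, (hC _).mpr ⟨A, ⟨a, b, hab, hAv⟩, rfl⟩,
      QuotientGroup.mk (A⁻¹ * M), (hD _).mpr ⟨A⁻¹ * M, ?_, rfl⟩, ?_⟩
    · show ((A⁻¹ * M : GL (Fin 2) F) : Matrix (Fin 2) (Fin 2) F) 1 0 = 0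
      rw [Units.val_mul, Matrix.GeneralLinearGroup.coe_inv, Matrix.inv_def,
        Matrix.adjugate_fin_two, hAv]
      simp [Matrix.mul_apply, Fin.sum_univ_two, ← ha, ← hb]
      ring
    · rw [← QuotientGroup.mk_mul, mul_inv_cancel_left]
  · -- trivial intersection
    rw [eq_bot_iff]
    intro x hx
    rw [Subgroup.mem_inf] at hx
    obtain ⟨hxC, hxD⟩ := hx
    obtain ⟨M, ⟨a, b, hab, hMv⟩, hMx⟩ := (hC x).mp hxC
    obtain ⟨N, hN0, hNx⟩ := (hD x).mp hxD
    have hmk : (QuotientGroup.mk M : PGL2 F) = QuotientGroup.mk N := hMx.trans hNx.symm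
    have hZ : M⁻¹ * N ∈ Subgroup.center (GL (Fin 2) F) := QuotientGroup.eq.mp hmk
    obtain ⟨z, hz0, hzv⟩ := GL_center_scalar hZ
    have hNv : (N : Matrix (Fin 2) (Fin 2) F) =
        (M : Matrix (Fin 2) (Fin 2) F) * (z • 1) := by
      rw [← hzv]
      have : M * (M⁻¹ * N) = N := by group
      rw [← Units.val_mul, this]
    have hb0 : b = 0 := by
      have h10 := Matrix.ext_iff.mpr hNv 1 0
      rw [hN0, hMv] at h10
      simp [Matrix.mul_apply, Fin.sum_univ_two, Matrix.one_apply] at h10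
      rcases h10 with h | h
      · exact h
      · exact absurd h hz0
    subst hb0
    have hMscalar : (M : Matrix (Fin 2) (Fin 2) F) = a • 1 := by
      rw [hMv]
      ext i j
      fin_cases i <;> fin_cases j <;> simp [Matrix.one_apply]
    rw [Subgroup.mem_bot, ← hMx, QuotientGroup.eq_one_iff]
    rw [Subgroup.mem_center_iff]
    intro g
    apply Units.ext
    show (g : Matrix (Fin 2) (Fin 2) F) * M = (M : Matrix (Fin 2) (Fin 2) F) * g
    rw [hMscalar, mul_smul_comm, smul_mul_assoc, mul_one, one_mul]
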